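/- Let L be an FDD-lattice. Then the compact elements of the dcpo pt(L) are exactly the maps γ_a with a ∈ Cp(L); that is, K(pt(L)) = {γ_a : a ∈ Cp(L)}. -/
import Mathlib


section Domains

variable (P : Type*) [PartialOrder P]

/-- A dcpo: every nonempty directed subset has a least upper bound. -/
def DirectedComplete : Prop :=
  ∀ D : Set P, D.Nonempty → DirectedOn (· ≤ ·) D → ∃ s, IsLUB D s

variable {P}

/-- A compact (finite) element of a poset. -/
def IsCompactElt (k : P) : Prop :=
  ∀ D : Set P, D.Nonempty → DirectedOn (· ≤ ·) D → ∀ s : P, IsLUB D s → k ≤ s →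
    ∃ d ∈ D, k ≤ d

/-- A Scott-open subset: an upper set inaccessible by directed suprema. -/
def ScottOpen (U : Set P) : Prop :=
  IsUpperSet U ∧ ∀ D : Set P, D.Nonempty → DirectedOn (· ≤ ·) D → ∀ s : P, IsLUB D s →
    s ∈ U → (D ∩ U).Nonempty

/-- Compactness of a set with respect to covers by Scott-open sets. -/
def ScottCompactSet (K : Set P) : Prop :=
  ∀ C : Set (Set P), (∀ V ∈ C, ScottOpen V) → K ⊆ ⋃₀ C →
    ∃ F : Finset (Set P), ↑F ⊆ C ∧ K ⊆ ⋃₀ (F : Set (Set P))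

variable (P)

/-- The collection of compact-open subsets (w.r.t. the Scott topology). -/
def CO : Set (Set P) := {U | ScottOpen U ∧ ScottCompactSet U}

/-- An algebraic domain: a dcpo in which, for every `x`, the set of compact elements
below `x` is a (nonempty) directed set with least upper bound `x`. -/
def IsAlgebraicDomain : Prop :=
  DirectedComplete P ∧
  ∀ x : P,
    (Set.Iic x ∩ {k | IsCompactElt k}).Nonempty ∧
    DirectedOn (· ≤ ·) (Set.Iic x ∩ {k | IsCompactElt k}) ∧
    IsLUB (Set.Iic x ∩ {k | IsCompactElt k}) x

/-- Every principal ideal `↓x` is a complete lattice in the induced order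
(equivalently: every subset of `↓x` has a least upper bound inside `↓x`). -/
def PrincipalIdealsComplete : Prop :=
  ∀ x : P, ∀ S : Set P, S ⊆ Set.Iic x →
    ∃ s, s ≤ x ∧ (∀ a ∈ S, a ≤ s) ∧ ∀ u, u ≤ x → (∀ a ∈ S, a ≤ u) → s ≤ u

/-- An algebraic L-domain. -/
def IsAlgebraicLDomain : Prop := IsAlgebraicDomain P ∧ PrincipalIdealsComplete P

/-- The Lawson topology: generated by the Scott-open sets together with complements
of principal filters. -/
def lawsonTopology : TopologicalSpace P :=
  TopologicalSpace.generateFrom ({U | ScottOpen U} ∪ {U | ∃ x : P, U = (Set.Ici x)ᶜ})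

/-- Lawson compactness: compactness in the Lawson topology. -/
def LawsonCompact : Prop := @CompactSpace P (lawsonTopology P)

end Domains

section FDD

variable {L : Type*} [Lattice L] [BoundedOrder L]

/-- A nonzero co-prime element. -/
def CoprimeElt (a : L) : Prop :=
  a ≠ ⊥ ∧ ∀ x y : L, a ≤ x ⊔ y → a ≤ x ∨ a ≤ y

/-- A finitely disjunctive distributive lattice (FDD-lattice): a bounded distributive
lattice in which (1) every element is a finite join of nonzero co-primes, and
(2) the meet of two nonzero co-primes is a finite join of pairwise disjoint
nonzero co-primes. -/
def IsFDD (L : Type*) [DistribLattice L] [BoundedOrder L] : Prop :=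
  (∀ x : L, ∃ F : Finset L, (∀ a ∈ F, CoprimeElt a) ∧ x = F.sup id) ∧
  (∀ a b : L, CoprimeElt a → CoprimeElt b →
    ∃ F : Finset L, (∀ c ∈ F, CoprimeElt c) ∧
      (∀ c ∈ F, ∀ d ∈ F, c ≠ d → c ⊓ d = ⊥) ∧ a ⊓ b = F.sup id)

/-- A point of a bounded lattice: a lattice homomorphism into the two-element
bounded lattice `Bool` preserving `0`, `1`, binary meets and binary joins. -/
def IsPoint (p : L → Bool) : Prop :=
  p ⊥ = false ∧ p ⊤ = true ∧
  (∀ x y : L, p (x ⊓ y) = (p x && p y)) ∧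
  (∀ x y : L, p (x ⊔ y) = (p x || p y))

end FDD

/-- The poset of points of a bounded lattice, with the pointwise order. -/
def Pt (L : Type*) [Lattice L] [BoundedOrder L] : Type _ :=
  {p : L → Bool // IsPoint p}

noncomputable instance (L : Type*) [Lattice L] [BoundedOrder L] : PartialOrder (Pt L) :=
  inferInstanceAs (PartialOrder {p : L → Bool // IsPoint p})

/-- `γ_a : L → {0,1}`, `γ_a x = 1` iff `a ≤ x`. -/
noncomputable def gammaPt {L : Type*} [Lattice L] [BoundedOrder L] (a : L) : L → Bool :=
  fun x => @decide (a ≤ x) (Classical.propDecidable _)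

/-- A bounded lattice homomorphism. -/
def IsBLH {L M : Type*} [Lattice L] [BoundedOrder L] [Lattice M] [BoundedOrder M]
    (f : L → M) : Prop :=
  f ⊥ = ⊥ ∧ f ⊤ = ⊤ ∧ (∀ x y, f (x ⊓ y) = f x ⊓ f y) ∧ (∀ x y, f (x ⊔ y) = f x ⊔ f y)

section Aux

variable {L : Type*} [Lattice L] [BoundedOrder L]

lemma gamma_true {a x : L} : gammaPt a x = true ↔ a ≤ x := by
  simp [gammaPt]

lemma point_mono {p : L → Bool} (hp : IsPoint p) {a b : L} (hab : a ≤ b)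
    (ha : p a = true) : p b = true := by
  have h := hp.2.2.1 a b
  rw [inf_eq_left.mpr hab, ha] at h
  simpa using h.symm

lemma gamma_isPoint {a : L} (ha : CoprimeElt a) : IsPoint (gammaPt a) := by
  refine ⟨?_, ?_, ?_, ?_⟩
  · simp [gammaPt, le_bot_iff, ha.1]
  · simp [gammaPt]
  · intro x y
    rw [Bool.eq_iff_iff, Bool.and_eq_true]
    simp only [gamma_true, le_inf_iff]
  · intro x y
    rw [Bool.eq_iff_iff, Bool.or_eq_true]
    simp only [gamma_true]
    exact ⟨ha.2 x y, fun h => h.elim (fun h => h.trans le_sup_left) (fun h => h.trans le_sup_right)⟩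

lemma pt_le_iff {p q : Pt L} : p ≤ q ↔ ∀ x, p.1 x = true → q.1 x = true := by
  constructor
  · intro h x hx
    have hh : p.1 x ≤ q.1 x := h x
    rw [hx] at hh
    exact le_antisymm (by simp) hh
  · intro h x
    have : p.1 x ≤ q.1 x := by
      by_cases hx : p.1 x = true
      · rw [hx, h x hx]
      · simp [Bool.eq_false_iff.mpr hx]
    exact this

lemma point_finsup {p : L → Bool} (hp : IsPoint p) (F : Finset L) :
    p (F.sup id) = true ↔ ∃ a ∈ F, p a = true := by
  classical
  induction F using Finset.induction with
  | empty => simp [hp.1]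
  | @insert a F hnotin ih =>
    rw [Finset.sup_insert, hp.2.2.2]
    simp only [Bool.or_eq_true, ih, Finset.mem_insert]
    constructor
    · rintro (h | ⟨b, hb, hb'⟩)
      · exact ⟨a, Or.inl rfl, by simpa using h⟩
      · exact ⟨b, Or.inr hb, hb'⟩
    · rintro ⟨b, hb | hb, hb'⟩
      · subst hb; exact Or.inl (by simpa using hb')
      · exact Or.inr ⟨b, hb, hb'⟩

/-- pointwise sup of a nonempty directed set of points -/
noncomputable def ptSup (D : Set (Pt L)) : L → Bool :=
  fun x => @decide (∃ p ∈ D, p.1 x = true) (Classical.propDecidable _)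

lemma ptSup_true {D : Set (Pt L)} {x : L} :
    ptSup D x = true ↔ ∃ p ∈ D, p.1 x = true := by simp [ptSup]

lemma ptSup_isPoint {D : Set (Pt L)} (hne : D.Nonempty)
    (hdir : DirectedOn (· ≤ ·) D) : IsPoint (ptSup D) := by
  refine ⟨?_, ?_, ?_, ?_⟩
  · rw [Bool.eq_false_iff]
    intro h
    obtain ⟨p, _, hp⟩ := ptSup_true.mp h
    rw [p.2.1] at hp; exact Bool.false_ne_true hp
  · obtain ⟨p, hp⟩ := hne
    exact ptSup_true.mpr ⟨p, hp, p.2.2.1⟩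
  · intro x y
    rw [Bool.eq_iff_iff]
    simp only [Bool.and_eq_true]
    constructor
    · intro h
      obtain ⟨p, hpD, hp⟩ := ptSup_true.mp h
      exact ⟨ptSup_true.mpr ⟨p, hpD, point_mono p.2 inf_le_left hp⟩,
        ptSup_true.mpr ⟨p, hpD, point_mono p.2 inf_le_right hp⟩⟩
    · rintro ⟨hx, hy⟩
      obtain ⟨p, hpD, hp⟩ := ptSup_true.mp hx
      obtain ⟨q, hqD, hq⟩ := ptSup_true.mp hy
      obtain ⟨r, hrD, hpr, hqr⟩ := hdir p hpD q hqD
      have hrx := pt_le_iff.mp hpr x hp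
      have hry := pt_le_iff.mp hqr y hq
      have : r.1 (x ⊓ y) = true := by rw [r.2.2.2.1, hrx, hry]; rfl
      exact ptSup_true.mpr ⟨r, hrD, this⟩
  · intro x y
    rw [Bool.eq_iff_iff]
    simp only [Bool.or_eq_true]
    constructor
    · intro h
      obtain ⟨p, hpD, hp⟩ := ptSup_true.mp h
      rw [p.2.2.2.2] at hp
      rw [Bool.or_eq_true] at hp
      rcases hp with h' | h'
      · exact Or.inl (ptSup_true.mpr ⟨p, hpD, h'⟩)
      · exact Or.inr (ptSup_true.mpr ⟨p, hpD, h'⟩)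
    · rintro (h | h)
      · obtain ⟨p, hpD, hp⟩ := ptSup_true.mp h
        exact ptSup_true.mpr ⟨p, hpD, point_mono p.2 le_sup_left hp⟩
      · obtain ⟨p, hpD, hp⟩ := ptSup_true.mp h
        exact ptSup_true.mpr ⟨p, hpD, point_mono p.2 le_sup_right hp⟩

lemma ptSup_isLUB {D : Set (Pt L)} (hne : D.Nonempty) (hdir : DirectedOn (· ≤ ·) D) :
    IsLUB D ⟨ptSup D, ptSup_isPoint hne hdir⟩ := by
  constructor
  · intro p hp
    exact pt_le_iff.mpr fun x hx => ptSup_true.mpr ⟨p, hp, hx⟩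
  · intro u hu
    refine pt_le_iff.mpr fun x hx => ?_
    obtain ⟨p, hpD, hp⟩ := ptSup_true.mp hx
    exact pt_le_iff.mp (hu hpD) x hp

end Aux

/-- For an FDD-lattice `L`, the compact elements of the dcpo `Pt L` are
exactly the maps `γ_a` with `a` a nonzero co-prime of `L`. -/
theorem stmt7 {L : Type*} [DistribLattice L] [BoundedOrder L] (hL : IsFDD L) :
    {q : Pt L | IsCompactElt q} =
      {q : Pt L | ∃ a : L, CoprimeElt a ∧ q.1 = gammaPt a} := by
  ext q
  simp only [Set.mem_setOf_eq]
  constructor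
  · -- compact → of the form γ_a
    intro hq
    set D : Set (Pt L) :=
      {r | ∃ a : L, CoprimeElt a ∧ q.1 a = true ∧ r.1 = gammaPt a} with hD
    have hne : D.Nonempty := by
      obtain ⟨F, hF, hFtop⟩ := hL.1 (⊤ : L)
      have : q.1 (F.sup id) = true := by rw [← hFtop]; exact q.2.2.1
      obtain ⟨a, haF, ha⟩ := (point_finsup q.2 F).mp this
      exact ⟨⟨gammaPt a, gamma_isPoint (hF a haF)⟩, a, hF a haF, ha, rfl⟩
    have hdir : DirectedOn (· ≤ ·) D := by
      rintro r1 ⟨a, ha, hqa, hra⟩ r2 ⟨b, hb, hqb, hrb⟩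
      have hqab : q.1 (a ⊓ b) = true := by rw [q.2.2.2.1, hqa, hqb]; rfl
      obtain ⟨F, hF, _, hFab⟩ := hL.2 a b ha hb
      have : q.1 (F.sup id) = true := by rw [← hFab]; exact hqab
      obtain ⟨c, hcF, hqc⟩ := (point_finsup q.2 F).mp this
      have hcab : c ≤ a ⊓ b := hFab ▸ Finset.le_sup (f := id) hcF
      refine ⟨⟨gammaPt c, gamma_isPoint (hF c hcF)⟩, ⟨c, hF c hcF, hqc, rfl⟩, ?_, ?_⟩
      · refine pt_le_iff.mpr fun x hx => ?_
        rw [hra] at hx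
        exact gamma_true.mpr ((hcab.trans inf_le_left).trans (gamma_true.mp hx))
      · refine pt_le_iff.mpr fun x hx => ?_
        rw [hrb] at hx
        exact gamma_true.mpr ((hcab.trans inf_le_right).trans (gamma_true.mp hx))
    have hub : ∀ r ∈ D, r ≤ q := by
      rintro r ⟨a, ha, hqa, hra⟩
      refine pt_le_iff.mpr fun x hx => ?_
      rw [hra] at hx
      exact point_mono q.2 (gamma_true.mp hx) hqa
    have hlub : IsLUB D q := by
      constructor
      · exact hub
      · intro u hu
        refine pt_le_iff.mpr fun x hx => ?_
        obtain ⟨F, hF, hFx⟩ := hL.1 x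
        have : q.1 (F.sup id) = true := by rw [← hFx]; exact hx
        obtain ⟨a, haF, hqa⟩ := (point_finsup q.2 F).mp this
        have hrD : (⟨gammaPt a, gamma_isPoint (hF a haF)⟩ : Pt L) ∈ D :=
          ⟨a, hF a haF, hqa, rfl⟩
        have hax : a ≤ x := hFx ▸ Finset.le_sup (f := id) haF
        exact pt_le_iff.mp (hu hrD) x (gamma_true.mpr hax)
    obtain ⟨r, hrD, hqr⟩ := hq D hne hdir q hlub le_rfl
    obtain ⟨a, ha, hqa, hra⟩ := hrD
    exact ⟨a, ha, le_antisymm hqr (hub r ⟨a, ha, hqa, hra⟩) ▸ hra⟩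
  · -- γ_a is compact
    rintro ⟨a, ha, hqa⟩
    intro D hne hdir s hs hqs
    have hseq : s = ⟨ptSup D, ptSup_isPoint hne hdir⟩ :=
      hs.unique (ptSup_isLUB hne hdir)
    have hsa : s.1 a = true :=
      pt_le_iff.mp hqs a (by rw [hqa]; exact gamma_true.mpr le_rfl)
    rw [hseq] at hsa
    obtain ⟨p, hpD, hpa⟩ := ptSup_true.mp hsa
    refine ⟨p, hpD, pt_le_iff.mpr fun x hx => ?_⟩
    rw [hqa] at hx
    exact point_mono p.2 (gamma_true.mp hx) hpa
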